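/- For every integer ℘ ≥ 5 with ℘ ≡ 1 (mod 4), the Toeplitz graph T_℘⟨{1, 2, ℘−1}⟩ satisfies ℘/(℘−1) ≤ ldim_f(T_℘⟨{1, 2, ℘−1}⟩) ≤ 2℘/(℘+1). -/

import Mathlib

set_option maxHeartbeats 1000000


open Finset

/-- A local resolving function of a graph `G`: a map `ζ : V → [0,1]` such that for every
pair of adjacent vertices `u v`, the sum of `ζ` over the local resolving neighborhood
`R{u,v} = {w : d(w,u) ≠ d(w,v)}` is at least `1`. -/
def IsLocalResolvingFunction {V : Type*} [Fintype V] (G : SimpleGraph V) (ζ : V → ℝ) : Prop :=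
  (∀ w, ζ w ∈ Set.Icc (0 : ℝ) 1) ∧
    ∀ u v, G.Adj u v →
      1 ≤ ∑ w ∈ Finset.univ.filter (fun w => G.dist w u ≠ G.dist w v), ζ w

/-- The local fractional metric dimension of `G`: the minimum of `∑ v, ζ v` over all
local resolving functions `ζ` of `G`. -/
noncomputable def ldimf {V : Type*} [Fintype V] (G : SimpleGraph V) : ℝ :=
  sInf {s : ℝ | ∃ ζ : V → ℝ, IsLocalResolvingFunction G ζ ∧ s = ∑ v, ζ v}

/-- The Toeplitz graph `T_n⟨S⟩` (vertices `0, …, n-1` standing for `1, …, n`):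
two distinct vertices are adjacent iff their absolute difference lies in `S`. -/
def toeplitzGraph (n : ℕ) (S : Set ℕ) : SimpleGraph (Fin n) where
  Adj p q := p ≠ q ∧ Nat.dist (p : ℕ) (q : ℕ) ∈ S
  symm := ⟨fun p q ⟨h1, h2⟩ => ⟨h1.symm, by rwa [Nat.dist_comm]⟩⟩
  loopless := ⟨fun p ⟨h, _⟩ => h rfl⟩

def dd (p a b : ℕ) : ℕ :=
  min ((max a b - min a b + 1) / 2) ((min a b + 1) / 2 + (p - max a b) / 2 + 1)

lemma tAdj (p : ℕ) (u v : Fin p) :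
    (toeplitzGraph p {1, 2, p - 1}).Adj u v ↔
      u ≠ v ∧ (Nat.dist (u : ℕ) (v : ℕ) = 1 ∨ Nat.dist (u : ℕ) (v : ℕ) = 2 ∨
        Nat.dist (u : ℕ) (v : ℕ) = p - 1) := by
  simp [toeplitzGraph, Set.mem_insert_iff]

lemma step_nat (p A B : ℕ) (hp : 5 ≤ p) (hA : A < p) (hB : B < p) (hne : A ≠ B) :
    ∃ C, C < p ∧ C ≠ B ∧
      (Nat.dist C B = 1 ∨ Nat.dist C B = 2 ∨ Nat.dist C B = p - 1) ∧
      dd p A C < dd p A B := by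
  rcases Nat.lt_or_ge A B with h | h
  · by_cases hf : (B - A + 1) / 2 ≤ (A + 1) / 2 + (p - B) / 2 + 1
    · by_cases hb : B = A + 1
      · exact ⟨A, by omega, by omega, by simp only [Nat.dist]; omega, by unfold dd; omega⟩
      · exact ⟨B - 2, by omega, by omega, by simp only [Nat.dist]; omega, by unfold dd; omega⟩
    · by_cases hb : B + 3 ≤ p
      · exact ⟨B + 2, by omega, by omega, by simp only [Nat.dist]; omega, by unfold dd; omega⟩
      · by_cases hb2 : B + 2 = p
        · exact ⟨B + 1, by omega, by omega, by simp only [Nat.dist]; omega, by unfold dd; omega⟩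
        · exact ⟨0, by omega, by omega, by simp only [Nat.dist]; omega, by unfold dd; omega⟩
  · have h' : B < A := by omega
    by_cases hf : (A - B + 1) / 2 ≤ (B + 1) / 2 + (p - A) / 2 + 1
    · by_cases hb : A = B + 1
      · exact ⟨A, by omega, by omega, by simp only [Nat.dist]; omega, by unfold dd; omega⟩
      · exact ⟨B + 2, by omega, by omega, by simp only [Nat.dist]; omega, by unfold dd; omega⟩
    · by_cases hb : 2 ≤ B
      · exact ⟨B - 2, by omega, by omega, by simp only [Nat.dist]; omega, by unfold dd; omega⟩
      · by_cases hb2 : B = 1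
        · exact ⟨0, by omega, by omega, by simp only [Nat.dist]; omega, by unfold dd; omega⟩
        · exact ⟨p - 1, by omega, by omega, by simp only [Nat.dist]; omega, by unfold dd; omega⟩

lemma exists_walk (p : ℕ) (hp : 5 ≤ p) :
    ∀ (n : ℕ) (a b : Fin p), dd p (a : ℕ) (b : ℕ) ≤ n →
      ∃ w : (toeplitzGraph p {1, 2, p - 1}).Walk a b, w.length ≤ n := by
  intro n
  induction n with
  | zero =>
    intro a b h
    have hab : a = b := by
      have ha := a.isLt; have hb := b.isLt
      have : (a : ℕ) = b := by unfold dd at h; omega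
      exact Fin.ext this
    subst hab
    exact ⟨SimpleGraph.Walk.nil, by simp⟩
  | succ n ih =>
    intro a b h
    by_cases hab : a = b
    · subst hab; exact ⟨SimpleGraph.Walk.nil, by simp⟩
    · obtain ⟨C, hC, hCB, hdist, hlt⟩ :=
        step_nat p (a : ℕ) (b : ℕ) hp a.isLt b.isLt (fun he => hab (Fin.ext he))
      have hadj : (toeplitzGraph p {1, 2, p - 1}).Adj ⟨C, hC⟩ b :=
        (tAdj p _ _).mpr ⟨fun he => hCB (congrArg Fin.val he), hdist⟩
      obtain ⟨w, hw⟩ := ih a ⟨C, hC⟩ (by simp only [Fin.val_mk]; omega)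
      exact ⟨w.concat hadj, by rw [SimpleGraph.Walk.length_concat]; omega⟩

lemma lip (p x y b : ℕ) (hp : 5 ≤ p) (hx : x < p) (hy : y < p) (hb : b < p)
    (h : Nat.dist x y = 1 ∨ Nat.dist x y = 2 ∨ Nat.dist x y = p - 1) :
    dd p x b ≤ dd p y b + 1 := by
  simp only [Nat.dist] at h; unfold dd; omega

lemma dd_le_length (p : ℕ) (hp : 5 ≤ p) :
    ∀ {a b : Fin p} (w : (toeplitzGraph p {1, 2, p - 1}).Walk a b),
      dd p (a : ℕ) (b : ℕ) ≤ w.length := by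
  intro a b w
  induction w with
  | nil => unfold dd; simp
  | @cons x y z hadj w ih =>
    obtain ⟨-, hd⟩ := (tAdj p _ _).mp hadj
    have := lip p (x : ℕ) (y : ℕ) (z : ℕ) hp x.isLt y.isLt z.isLt hd
    rw [SimpleGraph.Walk.length_cons]
    omega

lemma dist_eq (p : ℕ) (hp : 5 ≤ p) (a b : Fin p) :
    (toeplitzGraph p {1, 2, p - 1}).dist a b = dd p (a : ℕ) (b : ℕ) := by
  obtain ⟨w, hw⟩ := exists_walk p hp (dd p (a : ℕ) (b : ℕ)) a b le_rfl
  refine le_antisymm ((SimpleGraph.dist_le w).trans hw) ?_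
  obtain ⟨w', hw'⟩ := SimpleGraph.Reachable.exists_walk_length_eq_dist ⟨w⟩
  calc dd p (a : ℕ) (b : ℕ) ≤ w'.length := dd_le_length p hp w'
  _ = _ := hw'

lemma card_range_even : ∀ n : ℕ, ((range n).filter (fun m => m % 2 = 0)).card = (n + 1) / 2 := by
  intro n
  induction n with
  | zero => simp
  | succ n ih =>
    rw [range_add_one, filter_insert]
    by_cases h : n % 2 = 0
    · rw [if_pos h, card_insert_of_notMem (fun hmem => by simp only [mem_filter, mem_range] at hmem; omega)]
      omega
    · rw [if_neg h]; omega

lemma card_evens (p : ℕ) (hp : 0 < p) :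
    ((univ : Finset (Fin p)).filter (fun w : Fin p => (w : ℕ) % 2 = 0)).card = (p + 1) / 2 := by
  rw [← card_range_even p]
  apply card_bij (fun (w : Fin p) _ => (w : ℕ))
  · intro a ha; simp only [mem_filter, mem_range] at ha ⊢; exact ⟨a.isLt, ha.2⟩
  · intro a _ b _ h; exact Fin.ext h
  · intro b hb; simp only [mem_filter, mem_range] at hb
    exact ⟨⟨b, hb.1⟩, by simp [hb.2], rfl⟩

lemma key_count (p k : ℕ) (hpk : p = 4 * k + 1) (hk : 1 ≤ k) (u v : Fin p) (huv : (u : ℕ) < v)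
    (hadj : (toeplitzGraph p {1, 2, p - 1}).Adj u v) :
    k + 1 ≤ ((univ : Finset (Fin p)).filter (fun w : Fin p =>
      ((toeplitzGraph p {1, 2, p - 1}).dist w u ≠ (toeplitzGraph p {1, 2, p - 1}).dist w v ∧
        (w : ℕ) % 2 = 0))).card := by
  have hp5 : 5 ≤ p := by omega
  have hu := u.isLt; have hv := v.isLt
  obtain ⟨hne, hd⟩ := (tAdj p u v).mp hadj
  have hvu : (v : ℕ) - (u : ℕ) = 1 ∨ (v : ℕ) - (u : ℕ) = 2 ∨
      ((u : ℕ) = 0 ∧ (v : ℕ) = p - 1) := by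
    simp only [Nat.dist] at hd; omega
  rcases hvu with h1 | h2 | h3
  · -- difference-1 edge: injection from range (k+1)
    have hv1 : (v : ℕ) = (u : ℕ) + 1 := by omega
    by_cases hpar : (u : ℕ) % 2 = 0
    · -- u even: witnesses go downward with wraparound
      have hcard := Finset.card_le_card_of_injOn
        (f := fun j : ℕ => (⟨(if 2 * j ≤ (u : ℕ) then (u : ℕ) - 2 * j
            else (u : ℕ) + p + 1 - 2 * j) % p, Nat.mod_lt _ (by omega)⟩ : Fin p))
        (s := range (k + 1))
        (t := ((univ : Finset (Fin p)).filter (fun w : Fin p =>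
      ((toeplitzGraph p {1, 2, p - 1}).dist w u ≠ (toeplitzGraph p {1, 2, p - 1}).dist w v ∧
        (w : ℕ) % 2 = 0))))
        ?_ ?_
      · rwa [card_range] at hcard
      · intro j hj
        rw [mem_coe, mem_range] at hj
        have hval : ((⟨(if 2 * j ≤ (u : ℕ) then (u : ℕ) - 2 * j
            else (u : ℕ) + p + 1 - 2 * j) % p, Nat.mod_lt _ (by omega)⟩ : Fin p) : ℕ)
            = if 2 * j ≤ (u : ℕ) then (u : ℕ) - 2 * j else (u : ℕ) + p + 1 - 2 * j := by
          simp only [Fin.val_mk]; apply Nat.mod_eq_of_lt; split <;> omega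
        rw [mem_coe, mem_filter]
        refine ⟨mem_univ _, ?_, by rw [hval]; split <;> omega⟩
        rw [dist_eq p hp5, dist_eq p hp5, hval, hv1]
        unfold dd; split <;> omega
      · intro j1 hj1 j2 hj2 he
        simp only [coe_range, Set.mem_Iio] at hj1 hj2
        have hval := congrArg Fin.val he
        simp only [Fin.val_mk] at hval
        rw [Nat.mod_eq_of_lt (by split <;> omega), Nat.mod_eq_of_lt (by split <;> omega)] at hval
        split at hval <;> split at hval <;> omega
    · -- u odd: witnesses go upward with wraparound
      have hcard := Finset.card_le_card_of_injOn
        (f := fun j : ℕ => (⟨(if (u : ℕ) + 1 + 2 * j ≤ p - 1 then (u : ℕ) + 1 + 2 * j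
            else (u : ℕ) + 1 + 2 * j - (p + 1)) % p, Nat.mod_lt _ (by omega)⟩ : Fin p))
        (s := range (k + 1))
        (t := ((univ : Finset (Fin p)).filter (fun w : Fin p =>
      ((toeplitzGraph p {1, 2, p - 1}).dist w u ≠ (toeplitzGraph p {1, 2, p - 1}).dist w v ∧
        (w : ℕ) % 2 = 0))))
        ?_ ?_
      · rwa [card_range] at hcard
      · intro j hj
        rw [mem_coe, mem_range] at hj
        have hval : ((⟨(if (u : ℕ) + 1 + 2 * j ≤ p - 1 then (u : ℕ) + 1 + 2 * j
            else (u : ℕ) + 1 + 2 * j - (p + 1)) % p, Nat.mod_lt _ (by omega)⟩ : Fin p) : ℕ)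
            = if (u : ℕ) + 1 + 2 * j ≤ p - 1 then (u : ℕ) + 1 + 2 * j
              else (u : ℕ) + 1 + 2 * j - (p + 1) := by
          simp only [Fin.val_mk]; apply Nat.mod_eq_of_lt; split <;> omega
        rw [mem_coe, mem_filter]
        refine ⟨mem_univ _, ?_, by rw [hval]; split <;> omega⟩
        rw [dist_eq p hp5, dist_eq p hp5, hval, hv1]
        unfold dd; split <;> omega
      · intro j1 hj1 j2 hj2 he
        simp only [coe_range, Set.mem_Iio] at hj1 hj2
        have hval := congrArg Fin.val he
        simp only [Fin.val_mk] at hval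
        rw [Nat.mod_eq_of_lt (by split <;> omega), Nat.mod_eq_of_lt (by split <;> omega)] at hval
        split at hval <;> split at hval <;> omega
  · -- difference-2 edge: all even vertices except at most one bad one
    have hv2 : (v : ℕ) = (u : ℕ) + 2 := by omega
    obtain ⟨bad, hbaddef⟩ : ∃ b : ℕ, b = if (u : ℕ) % 2 = 1 then (u : ℕ) + 1
      else (if (u : ℕ) + (p + 3) / 2 ≤ p - 1 then (u : ℕ) + (p + 3) / 2
        else (u : ℕ) + (p + 3) / 2 - (p + 1)) := ⟨_, rfl⟩
    have hsub : ((univ : Finset (Fin p)).filter (fun w : Fin p => (w : ℕ) % 2 = 0)).filter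
        (fun w : Fin p => (w : ℕ) ≠ bad) ⊆ ((univ : Finset (Fin p)).filter (fun w : Fin p =>
      ((toeplitzGraph p {1, 2, p - 1}).dist w u ≠ (toeplitzGraph p {1, 2, p - 1}).dist w v ∧
        (w : ℕ) % 2 = 0))) := by
      intro w hw
      simp only [mem_filter] at hw ⊢
      refine ⟨mem_univ _, ?_, hw.1.2⟩
      have hbad := hw.2
      have hwe := hw.1.2
      have hwlt := w.isLt
      rw [dist_eq p hp5, dist_eq p hp5, hv2]
      rw [hbaddef] at hbad
      unfold dd
      split at hbad
      · omega
      · split at hbad <;> omega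
    calc k + 1 ≤ (p + 1) / 2 - 1 := by omega
    _ ≤ _ := by
      have hsplit := Finset.card_filter_add_card_filter_not
        (s := (univ : Finset (Fin p)).filter (fun w : Fin p => (w : ℕ) % 2 = 0))
        (p := fun w : Fin p => (w : ℕ) ≠ bad)
      have hone : (((univ : Finset (Fin p)).filter (fun w : Fin p => (w : ℕ) % 2 = 0)).filter
          (fun w : Fin p => ¬ (w : ℕ) ≠ bad)).card ≤ 1 := by
        apply card_le_one.mpr
        intro a ha b hb
        simp only [mem_filter, not_not] at ha hb
        exact Fin.ext (ha.2.trans hb.2.symm)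
      have hE := card_evens p (by omega)
      have hmid := card_le_card hsub
      omega
  · -- wrap edge
    have hsub : ((univ : Finset (Fin p)).filter (fun w : Fin p => (w : ℕ) % 2 = 0)).filter
        (fun w : Fin p => (w : ℕ) ≠ 2 * k) ⊆ ((univ : Finset (Fin p)).filter (fun w : Fin p =>
      ((toeplitzGraph p {1, 2, p - 1}).dist w u ≠ (toeplitzGraph p {1, 2, p - 1}).dist w v ∧
        (w : ℕ) % 2 = 0))) := by
      intro w hw
      simp only [mem_filter] at hw ⊢
      refine ⟨mem_univ _, ?_, hw.1.2⟩
      have hbad := hw.2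
      have hwe := hw.1.2
      have hwlt := w.isLt
      rw [dist_eq p hp5, dist_eq p hp5, h3.1, h3.2]
      unfold dd; omega
    calc k + 1 ≤ (p + 1) / 2 - 1 := by omega
    _ ≤ _ := by
      have hsplit := Finset.card_filter_add_card_filter_not
        (s := (univ : Finset (Fin p)).filter (fun w : Fin p => (w : ℕ) % 2 = 0))
        (p := fun w : Fin p => (w : ℕ) ≠ 2 * k)
      have hone : (((univ : Finset (Fin p)).filter (fun w : Fin p => (w : ℕ) % 2 = 0)).filter
          (fun w : Fin p => ¬ (w : ℕ) ≠ 2 * k)).card ≤ 1 := by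
        apply card_le_one.mpr
        intro a ha b hb
        simp only [mem_filter, not_not] at ha hb
        exact Fin.ext (ha.2.trans hb.2.symm)
      have hE := card_evens p (by omega)
      have hmid := card_le_card hsub
      omega

def nxt {p : ℕ} (i : Fin p) : Fin p :=
  ⟨if (i : ℕ) + 1 < p then (i : ℕ) + 1 else 0, by split; exacts [‹_›, i.pos]⟩

lemma nxt_val {p : ℕ} (i : Fin p) :
    ((nxt i : Fin p) : ℕ) = if (i : ℕ) + 1 < p then (i : ℕ) + 1 else 0 := rfl

lemma adj_nxt (p : ℕ) (hp : 5 ≤ p) (i : Fin p) :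
    (toeplitzGraph p {1, 2, p - 1}).Adj i (nxt i) := by
  have hi := i.isLt
  rw [tAdj]
  constructor
  · intro he
    have hv := congrArg Fin.val he
    rw [nxt_val] at hv
    split at hv <;> omega
  · rw [nxt_val]
    split <;> (simp only [Nat.dist]; omega)


/-- For every integer `℘ ≥ 5` with `℘ ≡ 1 (mod 4)`,
`℘/(℘-1) ≤ ldimf(T_℘⟨{1, 2, ℘-1}⟩) ≤ 2℘/(℘+1)`. -/
theorem ldimf_toeplitz_mod_four_one (p : ℕ) (hp : 5 ≤ p) (hmod : p % 4 = 1) :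
    (p : ℝ) / ((p : ℝ) - 1) ≤ ldimf (toeplitzGraph p {1, 2, p - 1}) ∧
      ldimf (toeplitzGraph p {1, 2, p - 1}) ≤ 2 * (p : ℝ) / ((p : ℝ) + 1) := by
  obtain ⟨k, hk, hpk⟩ : ∃ k, 1 ≤ k ∧ p = 4 * k + 1 := ⟨p / 4, by omega, by omega⟩
  have hpR : (5 : ℝ) ≤ (p : ℝ) := by exact_mod_cast hp
  have hkR : (1 : ℝ) ≤ (k : ℝ) := by exact_mod_cast hk
  have hpcast : (p : ℝ) = 4 * (k : ℝ) + 1 := by rw [hpk]; push_cast; ring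
  set G := toeplitzGraph p {1, 2, p - 1} with hG
  set c : ℝ := 4 / ((p : ℝ) + 3) with hc
  have hp3 : (0 : ℝ) < (p : ℝ) + 3 := by positivity
  have hc0 : 0 < c := by rw [hc]; positivity
  have hc1 : c ≤ 1 := by rw [hc, div_le_one hp3]; linarith
  set ζ : Fin p → ℝ := fun w => if (w : ℕ) % 2 = 0 then c else 0 with hζ
  have hζnn : ∀ w, 0 ≤ ζ w := fun w => by
    rw [hζ]; dsimp only; split
    · exact hc0.le
    · exact le_refl 0
  have hkc : ((k : ℝ) + 1) * c = 1 := by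
    rw [hc, hpcast]
    have h4 : (4 : ℝ) * (k : ℝ) + 1 + 3 ≠ 0 := by positivity
    field_simp
    ring
  have hLRF : IsLocalResolvingFunction G ζ := by
    constructor
    · intro w
      refine ⟨hζnn w, ?_⟩
      rw [hζ]; dsimp only; split
      · exact hc1
      · linarith
    · have main : ∀ u v : Fin p, G.Adj u v → (u : ℕ) < (v : ℕ) →
          1 ≤ ∑ w ∈ Finset.univ.filter (fun w => G.dist w u ≠ G.dist w v), ζ w := by
        intro u v hadj huv
        have hkey := key_count p k hpk hk u v huv hadj
        have hrw : ∑ w ∈ Finset.univ.filter (fun w => G.dist w u ≠ G.dist w v), ζ w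
            = (((univ : Finset (Fin p)).filter (fun w : Fin p =>
                (G.dist w u ≠ G.dist w v ∧ (w : ℕ) % 2 = 0))).card : ℝ) * c := by
          simp only [hζ]
          rw [← Finset.sum_filter, Finset.filter_filter, Finset.sum_const, nsmul_eq_mul]
        rw [hrw]
        calc (1 : ℝ) = ((k : ℝ) + 1) * c := hkc.symm
        _ ≤ _ := by
          apply mul_le_mul_of_nonneg_right _ hc0.le
          exact_mod_cast hkey
      intro u v hadj
      have hne : (u : ℕ) ≠ (v : ℕ) := fun he => ((tAdj p u v).mp hadj).1 (Fin.ext he)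
      rcases Nat.lt_or_ge (u : ℕ) (v : ℕ) with h | h
      · exact main u v hadj h
      · have hfeq : Finset.univ.filter (fun w : Fin p => G.dist w u ≠ G.dist w v)
            = Finset.univ.filter (fun w : Fin p => G.dist w v ≠ G.dist w u) :=
          filter_congr (fun w _ => ne_comm)
        rw [hfeq]
        exact main v u hadj.symm (by omega)
  have hsum : ∑ w, ζ w = ((2 * k + 1 : ℕ) : ℝ) * c := by
    simp only [hζ]
    rw [← Finset.sum_filter, Finset.sum_const, card_evens p (by omega), nsmul_eq_mul]
    have h2 : (p + 1) / 2 = 2 * k + 1 := by omega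
    rw [h2]
  have hmem : (∑ w, ζ w) ∈ {s : ℝ | ∃ ξ : Fin p → ℝ, IsLocalResolvingFunction G ξ ∧ s = ∑ v, ξ v} :=
    ⟨ζ, hLRF, rfl⟩
  have hbdd : BddBelow {s : ℝ | ∃ ξ : Fin p → ℝ, IsLocalResolvingFunction G ξ ∧ s = ∑ v, ξ v} := by
    refine ⟨0, ?_⟩
    rintro s ⟨ξ, hξ, rfl⟩
    exact Finset.sum_nonneg fun w _ => (hξ.1 w).1
  constructor
  · -- lower bound
    unfold ldimf
    apply le_csInf ⟨_, hmem⟩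
    rintro s ⟨ξ, hξ, rfl⟩
    have hmiss : ∀ w : Fin p, ∃ i₀ : Fin p, G.dist w i₀ = G.dist w (nxt i₀) := by
      intro w
      have hw := w.isLt
      by_cases hcase : (w : ℕ) + 3 ≤ p
      · refine ⟨⟨(w : ℕ) + 1, by omega⟩, ?_⟩
        have hnv : ((nxt (⟨(w : ℕ) + 1, by omega⟩ : Fin p) : Fin p) : ℕ) = (w : ℕ) + 2 := by
          rw [nxt_val]; simp only [Fin.val_mk]; split <;> omega
        have h1 : G.Adj w ⟨(w : ℕ) + 1, by omega⟩ := by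
          rw [hG, tAdj]
          exact ⟨fun he => by have := congrArg Fin.val he; simp only [Fin.val_mk] at this; omega,
            by simp only [Fin.val_mk, Nat.dist]; omega⟩
        have h2 : G.Adj w (nxt (⟨(w : ℕ) + 1, by omega⟩ : Fin p)) := by
          rw [hG, tAdj]
          refine ⟨fun he => by have := congrArg Fin.val he; rw [hnv] at this; omega, ?_⟩
          rw [hnv]; simp only [Nat.dist]; omega
        rw [SimpleGraph.dist_eq_one_iff_adj.mpr h1, SimpleGraph.dist_eq_one_iff_adj.mpr h2]
      · refine ⟨⟨(w : ℕ) - 2, by omega⟩, ?_⟩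
        have hnv : ((nxt (⟨(w : ℕ) - 2, by omega⟩ : Fin p) : Fin p) : ℕ) = (w : ℕ) - 1 := by
          rw [nxt_val]; simp only [Fin.val_mk]; split <;> omega
        have h1 : G.Adj w ⟨(w : ℕ) - 2, by omega⟩ := by
          rw [hG, tAdj]
          exact ⟨fun he => by have := congrArg Fin.val he; simp only [Fin.val_mk] at this; omega,
            by simp only [Fin.val_mk, Nat.dist]; omega⟩
        have h2 : G.Adj w (nxt (⟨(w : ℕ) - 2, by omega⟩ : Fin p)) := by
          rw [hG, tAdj]
          refine ⟨fun he => by have := congrArg Fin.val he; rw [hnv] at this; omega, ?_⟩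
          rw [hnv]; simp only [Nat.dist]; omega
        rw [SimpleGraph.dist_eq_one_iff_adj.mpr h1, SimpleGraph.dist_eq_one_iff_adj.mpr h2]
    have hcard : ∀ w : Fin p,
        (((univ : Finset (Fin p)).filter (fun i : Fin p => G.dist w i ≠ G.dist w (nxt i))).card : ℝ)
          ≤ (p : ℝ) - 1 := by
      intro w
      obtain ⟨i₀, hi₀⟩ := hmiss w
      have hsub : (univ : Finset (Fin p)).filter (fun i : Fin p => G.dist w i ≠ G.dist w (nxt i))
          ⊆ univ.erase i₀ := by
        intro i hi
        rw [mem_filter] at hi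
        rw [mem_erase]
        exact ⟨fun he => hi.2 (he ▸ hi₀), mem_univ _⟩
      have hle := card_le_card hsub
      rw [card_erase_of_mem (mem_univ _), card_univ, Fintype.card_fin] at hle
      calc (_ : ℝ) ≤ ((p - 1 : ℕ) : ℝ) := Nat.cast_le.mpr hle
      _ = (p : ℝ) - 1 := by rw [Nat.cast_sub (by omega)]; norm_num
    have h1 : (p : ℝ) ≤ ∑ i : Fin p,
        ∑ w ∈ Finset.univ.filter (fun w => G.dist w i ≠ G.dist w (nxt i)), ξ w := by
      calc (p : ℝ) = ∑ _i : Fin p, (1 : ℝ) := by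
            rw [Finset.sum_const, card_univ, Fintype.card_fin, nsmul_eq_mul, mul_one]
      _ ≤ _ := Finset.sum_le_sum fun i _ => hξ.2 i (nxt i) (adj_nxt p hp i)
    have h2 : ∑ i : Fin p, ∑ w ∈ Finset.univ.filter (fun w => G.dist w i ≠ G.dist w (nxt i)), ξ w
        = ∑ w : Fin p,
            (((univ : Finset (Fin p)).filter
              (fun i : Fin p => G.dist w i ≠ G.dist w (nxt i))).card : ℝ) * ξ w := by
      simp_rw [Finset.sum_filter]
      rw [Finset.sum_comm]
      apply Finset.sum_congr rfl
      intro w _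
      rw [← Finset.sum_filter, Finset.sum_const, nsmul_eq_mul]
    have h3 : ∑ w : Fin p,
        (((univ : Finset (Fin p)).filter
          (fun i : Fin p => G.dist w i ≠ G.dist w (nxt i))).card : ℝ) * ξ w
        ≤ ((p : ℝ) - 1) * ∑ w, ξ w := by
      rw [Finset.mul_sum]
      exact Finset.sum_le_sum fun w _ => mul_le_mul_of_nonneg_right (hcard w) ((hξ.1 w).1)
    have hdc : (p : ℝ) ≤ ((p : ℝ) - 1) * ∑ w, ξ w := by
      rw [h2] at h1; linarith
    rw [div_le_iff₀ (by linarith : (0 : ℝ) < (p : ℝ) - 1)]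
    linarith
  · -- upper bound
    unfold ldimf
    calc sInf _ ≤ ∑ w, ζ w := csInf_le hbdd hmem
    _ = ((2 * k + 1 : ℕ) : ℝ) * c := hsum
    _ ≤ 2 * (p : ℝ) / ((p : ℝ) + 1) := by
      rw [hc, hpcast]
      push_cast
      rw [← mul_div_assoc, div_le_div_iff₀ (by positivity) (by positivity)]
      nlinarith [hkR]
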